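/- Let A be a unital C*-algebra with a faithful tracial state τ, and let u = (e_{x,a})_{x,a ∈ Fin n} be a quantum permutation over A (each entry a projection, each row and column summing to 1). Define p(a,b|x,y) := τ(e_{x,a} e_{y,b}). Then p is a bisynchronous conditional probability density: p ≥ 0, ∑_{a,b} p(a,b|x,y) = 1 for all x,y, p(a,b|x,x) = 0 for a ≠ b, and p(a,a|x,y) = 0 for x ≠ y. -/
import Mathlib


open ComplexOrder in
/-- A quantum permutation together with a faithful tracial state gives rise to a
bisynchronous conditional probability density `p(a,b|x,y) = τ(e_{x,a} e_{y,b})`. -/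
theorem quantum_permutation_trace_density_bisynchronous
    {A : Type*} [NormedRing A] [StarRing A] [CStarRing A] [NormedAlgebra ℂ A]
    [StarModule ℂ A] [CompleteSpace A]
    (τ : A →ₗ[ℂ] ℂ) (hτ1 : τ 1 = 1)
    (hτtr : ∀ a b : A, τ (a * b) = τ (b * a))
    (hτpos : ∀ a : A, 0 ≤ τ (star a * a))
    (hτfaith : ∀ a : A, τ (star a * a) = 0 → a = 0)
    {n : ℕ} (e : Fin n → Fin n → A)
    (hidem : ∀ x a, e x a * e x a = e x a)
    (hsa : ∀ x a, star (e x a) = e x a)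
    (hrow : ∀ x, ∑ a, e x a = 1)
    (hcol : ∀ a, ∑ x, e x a = 1) :
    (∀ x y a b, 0 ≤ τ (e x a * e y b)) ∧
    (∀ x y, ∑ a, ∑ b, τ (e x a * e y b) = 1) ∧
    (∀ x a b, a ≠ b → τ (e x a * e x b) = 0) ∧
    (∀ x y a, x ≠ y → τ (e x a * e y a) = 0) := by
  have key : ∀ x y a b, τ (e x a * e y b)
      = τ (star (e y b * e x a) * (e y b * e x a)) := by
    intro x y a b
    have h1 : star (e y b * e x a) * (e y b * e x a)
        = e x a * e y b * e x a := by
      rw [star_mul, hsa, hsa, mul_assoc, ← mul_assoc (e y b), hidem, ← mul_assoc]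
    rw [h1, hτtr (e x a * e y b) (e x a), ← mul_assoc, hidem]
  have pos : ∀ x y a b, 0 ≤ τ (e x a * e y b) := by
    intro x y a b
    rw [key]
    exact hτpos _
  refine ⟨pos, ?_, ?_, ?_⟩
  · intro x y
    have : ∑ a, ∑ b, τ (e x a * e y b) = τ ((∑ a, e x a) * (∑ b, e y b)) := by
      rw [Finset.sum_mul]
      rw [map_sum]
      refine Finset.sum_congr rfl fun a _ => ?_
      rw [Finset.mul_sum, map_sum]
    rw [this, hrow, hrow, one_mul, hτ1]
  · intro x a b hab
    have hsum : ∑ c, τ (e x a * e x c) = τ (e x a) := by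
      rw [← map_sum, ← Finset.mul_sum, hrow, mul_one]
    have hsplit : τ (e x a) = τ (e x a * e x a)
        + ∑ c ∈ Finset.univ.erase a, τ (e x a * e x c) := by
      rw [← hsum, ← Finset.add_sum_erase _ _ (Finset.mem_univ a)]
    rw [hidem] at hsplit
    have hzero : ∑ c ∈ Finset.univ.erase a, τ (e x a * e x c) = 0 :=
      (left_eq_add.mp hsplit)
    exact (Finset.sum_eq_zero_iff_of_nonneg (fun c _ => pos x x a c)).mp hzero b
      (Finset.mem_erase.mpr ⟨hab.symm, Finset.mem_univ b⟩)
  · intro x y a hxy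
    have hsum : ∑ z, τ (e z a * e y a) = τ (e y a) := by
      rw [← map_sum, ← Finset.sum_mul, hcol, one_mul]
    have hsplit : τ (e y a) = τ (e y a * e y a)
        + ∑ z ∈ Finset.univ.erase y, τ (e z a * e y a) := by
      rw [← hsum, ← Finset.add_sum_erase _ _ (Finset.mem_univ y)]
    rw [hidem] at hsplit
    have hzero : ∑ z ∈ Finset.univ.erase y, τ (e z a * e y a) = 0 :=
      (left_eq_add.mp hsplit)
    exact (Finset.sum_eq_zero_iff_of_nonneg (fun z _ => pos z y a a)).mp hzero x
      (Finset.mem_erase.mpr ⟨hxy, Finset.mem_univ x⟩)
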